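/- Let P be a row-stochastic N×N real matrix with τ₁(P) < 1 and stationary distribution w, let r ∈ ℝᴺ be a (reward) vector, and let ϖ be any probability row vector. Then the average reward limit exists and is independent of the initial distribution: lim_{n→∞} (1/n) Σ_{t=1}^{n} ϖᵀ Pᵗ r = wᵀ r. -/

import Mathlib

open Filter

/-- Coefficient of ergodicity τ₁ of a row-stochastic matrix. -/
noncomputable def tau1 {N : ℕ} (P : Matrix (Fin N) (Fin N) ℝ) : ℝ :=
  (1 / 2) * ⨆ i, ⨆ j, ∑ k, |P i k - P j k|

section aux

variable {N : ℕ} [NeZero N]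

lemma fin_nonempty : Nonempty (Fin N) := ⟨⟨0, Nat.pos_of_ne_zero (NeZero.ne N)⟩⟩

/-- Sum of |P i k - P j k| is bounded by 2 τ₁. -/
lemma row_diff_le (P : Matrix (Fin N) (Fin N) ℝ) (i j : Fin N) :
    ∑ k, |P i k - P j k| ≤ 2 * tau1 P := by
  haveI := fin_nonempty (N := N)
  have h1 : ∀ i : Fin N, (⨆ j, ∑ k, |P i k - P j k|) ≤
      ⨆ i, ⨆ j, ∑ k, |P i k - P j k| := fun i =>
    le_ciSup (f := fun i : Fin N => ⨆ j, ∑ k, |P i k - P j k|)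
      (Set.Finite.bddAbove (Set.finite_range _)) i
  have h2 : ∑ k, |P i k - P j k| ≤ ⨆ j, ∑ k, |P i k - P j k| :=
    le_ciSup (f := fun j : Fin N => ∑ k, |P i k - P j k|)
      (Set.Finite.bddAbove (Set.finite_range _)) j
  have := h2.trans (h1 i)
  unfold tau1
  linarith

lemma tau1_nonneg (P : Matrix (Fin N) (Fin N) ℝ) : 0 ≤ tau1 P := by
  haveI := fin_nonempty (N := N)
  obtain ⟨i⟩ := fin_nonempty (N := N)
  have := row_diff_le P i i
  simp at this
  linarith

end aux

section osc

variable {N : ℕ} [NeZero N]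

noncomputable def oscil (g : Fin N → ℝ) : ℝ :=
  (Finset.univ.sup' (Finset.univ_nonempty (α := Fin N)) g) -
    (Finset.univ.inf' (Finset.univ_nonempty (α := Fin N)) g)

lemma le_sup (g : Fin N → ℝ) (i : Fin N) :
    g i ≤ Finset.univ.sup' (Finset.univ_nonempty (α := Fin N)) g :=
  Finset.le_sup' g (Finset.mem_univ i)

lemma inf_le (g : Fin N → ℝ) (i : Fin N) :
    Finset.univ.inf' (Finset.univ_nonempty (α := Fin N)) g ≤ g i :=
  Finset.inf'_le g (Finset.mem_univ i)

lemma oscil_nonneg (g : Fin N → ℝ) : 0 ≤ oscil g := by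
  obtain ⟨i⟩ := fin_nonempty (N := N)
  have := (inf_le g i).trans (le_sup g i)
  unfold oscil; linarith

/-- Average w.r.t. a probability vector lies between inf and sup. -/
lemma avg_le_sup (g u : Fin N → ℝ) (hu : ∀ i, 0 ≤ u i) (hsum : ∑ i, u i = 1) :
    ∑ i, u i * g i ≤ Finset.univ.sup' (Finset.univ_nonempty (α := Fin N)) g := by
  calc ∑ i, u i * g i
      ≤ ∑ i, u i * Finset.univ.sup' (Finset.univ_nonempty (α := Fin N)) g := by
        apply Finset.sum_le_sum
        intro i _
        exact mul_le_mul_of_nonneg_left (le_sup g i) (hu i)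
    _ = _ := by rw [← Finset.sum_mul, hsum, one_mul]

lemma inf_le_avg (g u : Fin N → ℝ) (hu : ∀ i, 0 ≤ u i) (hsum : ∑ i, u i = 1) :
    Finset.univ.inf' (Finset.univ_nonempty (α := Fin N)) g ≤ ∑ i, u i * g i := by
  calc Finset.univ.inf' (Finset.univ_nonempty (α := Fin N)) g
      = ∑ i, u i * Finset.univ.inf' (Finset.univ_nonempty (α := Fin N)) g := by
        rw [← Finset.sum_mul, hsum, one_mul]
    _ ≤ ∑ i, u i * g i := by
        apply Finset.sum_le_sum
        intro i _
        exact mul_le_mul_of_nonneg_left (inf_le g i) (hu i)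

lemma avg_diff_le (g u v : Fin N → ℝ) (hu : ∀ i, 0 ≤ u i) (husum : ∑ i, u i = 1)
    (hv : ∀ i, 0 ≤ v i) (hvsum : ∑ i, v i = 1) :
    |∑ i, u i * g i - ∑ i, v i * g i| ≤ oscil g := by
  rw [abs_le]
  constructor
  · have h1 := avg_le_sup g v hv hvsum
    have h2 := inf_le_avg g u hu husum
    unfold oscil; linarith
  · have h1 := avg_le_sup g u hu husum
    have h2 := inf_le_avg g v hv hvsum
    unfold oscil; linarith

/-- Oscillation contraction by one step. -/
lemma oscil_mulVec_le (P : Matrix (Fin N) (Fin N) ℝ)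
    (hPnn : ∀ i j, 0 ≤ P i j) (hProw : ∀ i, ∑ j, P i j = 1) (g : Fin N → ℝ) :
    oscil (P.mulVec g) ≤ tau1 P * oscil g := by
  set M := Finset.univ.sup' (Finset.univ_nonempty (α := Fin N)) g with hM
  set μ := Finset.univ.inf' (Finset.univ_nonempty (α := Fin N)) g with hμ
  have key : ∀ i j : Fin N, P.mulVec g i - P.mulVec g j ≤ tau1 P * oscil g := by
    intro i j
    have hrow : P.mulVec g i - P.mulVec g j
        = ∑ k, (P i k - P j k) * (g k - (M + μ) / 2) := by
      simp only [Matrix.mulVec, dotProduct]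
      rw [← Finset.sum_sub_distrib]
      rw [Finset.sum_congr rfl (fun k _ => by ring :
        ∀ k ∈ Finset.univ, P i k * g k - P j k * g k
          = (P i k - P j k) * (g k - (M + μ) / 2) + (P i k - P j k) * ((M + μ) / 2))]
      rw [Finset.sum_add_distrib, ← Finset.sum_mul, Finset.sum_sub_distrib,
        hProw i, hProw j]
      ring
    rw [hrow]
    calc ∑ k, (P i k - P j k) * (g k - (M + μ) / 2)
        ≤ ∑ k, |P i k - P j k| * ((M - μ) / 2) := by
          apply Finset.sum_le_sum
          intro k _
          calc (P i k - P j k) * (g k - (M + μ) / 2)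
              ≤ |(P i k - P j k) * (g k - (M + μ) / 2)| := le_abs_self _
            _ = |P i k - P j k| * |g k - (M + μ) / 2| := abs_mul _ _
            _ ≤ |P i k - P j k| * ((M - μ) / 2) := by
                apply mul_le_mul_of_nonneg_left _ (abs_nonneg _)
                rw [abs_le]
                have h1 := le_sup g k
                have h2 := inf_le g k
                constructor <;> [skip; skip] <;>
                  · simp only [← hM, ← hμ] at *
                    linarith
      _ = (∑ k, |P i k - P j k|) * ((M - μ) / 2) := by rw [Finset.sum_mul]
      _ ≤ (2 * tau1 P) * ((M - μ) / 2) := by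
          apply mul_le_mul_of_nonneg_right (row_diff_le P i j)
          have := oscil_nonneg g
          unfold oscil at this
          simp only [← hM, ← hμ] at this ⊢
          linarith
      _ = tau1 P * oscil g := by unfold oscil; simp only [← hM, ← hμ]; ring
  obtain ⟨i0, _, hi0⟩ := Finset.exists_mem_eq_sup' (Finset.univ_nonempty (α := Fin N))
    (P.mulVec g)
  obtain ⟨j0, _, hj0⟩ := Finset.exists_mem_eq_inf' (Finset.univ_nonempty (α := Fin N))
    (P.mulVec g)
  have := key i0 j0
  unfold oscil
  rw [hi0, hj0]
  exact this

end osc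

/-- For a row-stochastic `P` with `τ₁(P) < 1` and stationary distribution `w`,
the average reward limit exists and equals `wᵀr` for any initial distribution. -/
theorem average_reward_limit {N : ℕ} [NeZero N]
    (P : Matrix (Fin N) (Fin N) ℝ)
    (hPnn : ∀ i j, 0 ≤ P i j) (hProw : ∀ i, ∑ j, P i j = 1)
    (htau : tau1 P < 1)
    (w : Fin N → ℝ) (hwnn : ∀ i, 0 ≤ w i) (hwsum : ∑ i, w i = 1)
    (hwstat : ∀ j, ∑ i, w i * P i j = w j)
    (r : Fin N → ℝ)
    (ϖ : Fin N → ℝ) (hϖnn : ∀ i, 0 ≤ ϖ i) (hϖsum : ∑ i, ϖ i = 1) :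
    Tendsto (fun n : ℕ =>
        (1 / (n : ℝ)) * ∑ t ∈ Finset.Icc 1 n, ∑ i, ∑ j, ϖ i * (P ^ t) i j * r j)
      atTop (nhds (∑ j, w j * r j)) := by
  set L := ∑ j, w j * r j with hL
  -- a t = expected reward at time t
  set a : ℕ → ℝ := fun t => ∑ i, ϖ i * ((P ^ t).mulVec r) i with ha
  -- rewrite the double sum as a
  have hrw : ∀ t : ℕ, ∑ i, ∑ j, ϖ i * (P ^ t) i j * r j = a t := by
    intro t
    simp only [ha, Matrix.mulVec, dotProduct, Finset.mul_sum]
    congr 1; ext i; congr 1; ext j; ring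
  -- stationarity for powers
  have hstat : ∀ t : ℕ, ∑ i, w i * ((P ^ t).mulVec r) i = L := by
    intro t
    induction t with
    | zero => simp [pow_zero, Matrix.one_mulVec, hL]
    | succ n ih =>
      rw [pow_succ']
      have : (P * (P ^ n)).mulVec r = P.mulVec ((P ^ n).mulVec r) := by
        rw [Matrix.mulVec_mulVec]
      rw [this]
      set g := (P ^ n).mulVec r with hg
      calc ∑ i, w i * P.mulVec g i
          = ∑ i, ∑ k, w i * P i k * g k := by
            simp only [Matrix.mulVec, dotProduct, Finset.mul_sum]
            exact Finset.sum_congr rfl fun i _ =>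
              Finset.sum_congr rfl fun k _ => by ring
        _ = ∑ k, (∑ i, w i * P i k) * g k := by
            rw [Finset.sum_comm]
            exact Finset.sum_congr rfl fun k _ => (Finset.sum_mul ..).symm
        _ = ∑ k, w k * g k := by
            exact Finset.sum_congr rfl fun k _ => by rw [hwstat k]
        _ = L := ih
  -- oscillation decay
  have hosc : ∀ t : ℕ, oscil ((P ^ t).mulVec r) ≤ (tau1 P) ^ t * oscil r := by
    intro t
    induction t with
    | zero => simp [pow_zero, Matrix.one_mulVec]
    | succ n ih =>
      rw [pow_succ']
      rw [show (P * (P ^ n)).mulVec r = P.mulVec ((P ^ n).mulVec r) from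
        (Matrix.mulVec_mulVec _ _ _).symm]
      calc oscil (P.mulVec ((P ^ n).mulVec r))
          ≤ tau1 P * oscil ((P ^ n).mulVec r) := oscil_mulVec_le P hPnn hProw _
        _ ≤ tau1 P * ((tau1 P) ^ n * oscil r) :=
            mul_le_mul_of_nonneg_left ih (tau1_nonneg P)
        _ = (tau1 P) ^ (n + 1) * oscil r := by ring
  -- a t → L
  have hbound : ∀ t : ℕ, |a t - L| ≤ (tau1 P) ^ t * oscil r := by
    intro t
    rw [← hstat t]
    exact (avg_diff_le ((P ^ t).mulVec r) ϖ w hϖnn hϖsum hwnn hwsum).trans (hosc t)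
  have htend : Tendsto a atTop (nhds L) := by
    rw [← tendsto_sub_nhds_zero_iff]
    apply squeeze_zero_norm hbound
    have : Tendsto (fun t : ℕ => (tau1 P) ^ t) atTop (nhds 0) :=
      tendsto_pow_atTop_nhds_zero_of_norm_lt_one (by
        rw [Real.norm_eq_abs, abs_of_nonneg (tau1_nonneg P)]; exact htau)
    have := this.mul_const (oscil r)
    simpa using this
  -- Cesàro
  have hshift : Tendsto (fun t : ℕ => a (t + 1)) atTop (nhds L) :=
    htend.comp (tendsto_add_atTop_nat 1)
  have hces := hshift.cesaro
  have heq : (fun n : ℕ =>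
      (1 / (n : ℝ)) * ∑ t ∈ Finset.Icc 1 n, ∑ i, ∑ j, ϖ i * (P ^ t) i j * r j)
      = fun n : ℕ => ((n : ℝ))⁻¹ * ∑ t ∈ Finset.range n, a (t + 1) := by
    ext n
    rw [one_div]
    congr 1
    rw [← Finset.Ico_add_one_right_eq_Icc, Finset.sum_Ico_eq_sum_range]
    simp only [Nat.add_sub_cancel]
    exact Finset.sum_congr rfl fun t _ => by rw [hrw, Nat.add_comm]
  rw [heq]
  exact hces
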